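/- Let p be a prime with 2 ≤ r ≤ p ≤ k. Then w(r, k) > p^{r-1} · (w(1, k) - 1) = p^{r-1} · (k - 1); that is, there exists an r-coloring of {1, ..., p^{r-1}(k-1)} with no monochromatic arithmetic progression of length k. -/
import Mathlib


/-- `hasAP c N k` : the coloring `c` of `{1,...,N}` contains a monochromatic
arithmetic progression of length `k` with positive common difference. -/
def hasAP (c : ℕ → ℕ) (N k : ℕ) : Prop :=
  ∃ a d, 1 ≤ a ∧ 1 ≤ d ∧ a + (k - 1) * d ≤ N ∧ ∀ i < k, c (a + i * d) = c a

/-- `validColoring r k N c` : `c` is an `r`-coloring of `{1,...,N}` with no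
monochromatic `k`-term arithmetic progression. -/
def validColoring (r k N : ℕ) (c : ℕ → ℕ) : Prop :=
  (∀ n, 1 ≤ n → n ≤ N → 1 ≤ c n ∧ c n ≤ r) ∧ ¬ hasAP c N k

/-- The van der Waerden number: least `N` such that no valid `r`-coloring of
`{1,...,N}` (avoiding `k`-term monochromatic APs) exists. -/
noncomputable def vdw (r k : ℕ) : ℕ := sInf {N | ¬ ∃ c : ℕ → ℕ, validColoring r k N c}

/-- The block `S_i(r,k)`: `j`-th entry (`1 ≤ j ≤ p`) is `((i + j - 2) % r) + 1`. -/
def Sblock (r i j : ℕ) : ℕ := ((i + j - 2) % r) + 1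

/-- The recursive "color minus one" function underlying the good coloring. -/
def vcol (p : ℕ) : ℕ → ℕ → ℕ
  | 0, _ => 0
  | 1, _ => 0
  | (m+2), x => (vcol p (m+1) ((x-1)/p + 1) + (x-1) % p) % (m+2)

lemma vcol_le (p m x : ℕ) : vcol p m x ≤ m - 1 := by
  match m with
  | 0 => simp [vcol]
  | 1 => simp [vcol]
  | (m+2) =>
    have h : (vcol p (m+1) ((x-1)/p + 1) + (x-1) % p) % (m+2) < m + 2 :=
      Nat.mod_lt _ (by omega)
    show (vcol p (m+1) ((x-1)/p + 1) + (x-1) % p) % (m+2) ≤ m + 2 - 1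
    omega

/-- Surjectivity of `i ↦ (a + i*d) % p` for `p` prime not dividing `d`. -/
lemma exists_add_mul_mod_eq {p d : ℕ} (hp : p.Prime) (hd : ¬ p ∣ d) (a u : ℕ)
    (hu : u < p) : ∃ i < p, (a + i * d) % p = u := by
  haveI : Fact p.Prime := ⟨hp⟩
  haveI : NeZero p := ⟨hp.pos.ne'⟩
  have hdz : (d : ZMod p) ≠ 0 := by
    rw [Ne, ZMod.natCast_eq_zero_iff]; exact hd
  set z : ZMod p := ((u : ZMod p) - a) * (d : ZMod p)⁻¹ with hz
  refine ⟨z.val, z.val_lt, ?_⟩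
  have hzd : z * d = (u : ZMod p) - a := by
    rw [hz, mul_assoc, inv_mul_cancel₀ hdz, mul_one]
  have h1 : ((a + z.val * d : ℕ) : ZMod p) = (u : ZMod p) := by
    push_cast
    rw [ZMod.natCast_val, ZMod.cast_id, hzd]
    ring
  have h2 := (ZMod.natCast_eq_natCast_iff _ _ _).mp h1
  unfold Nat.ModEq at h2
  rwa [Nat.mod_eq_of_lt hu] at h2

/-- From equal residues mod `s` and bounds, conclude equality. -/
lemma eq_of_mod_s {s x y t : ℕ} (hs : 0 < s) (hx : x < s) (hy : y < s)
    (h : (x + t) % s = (y + t) % s) : x = y := by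
  haveI : NeZero s := ⟨hs.ne'⟩
  have h1 : ((x + t : ℕ) : ZMod s) = ((y + t : ℕ) : ZMod s) := by
    rw [← ZMod.natCast_mod (x + t) s, ← ZMod.natCast_mod (y + t) s, h]
  push_cast at h1
  have h2 : ((x : ℕ) : ZMod s) = ((y : ℕ) : ZMod s) := add_right_cancel h1
  have h3 := congrArg ZMod.val h2
  rwa [ZMod.val_cast_of_lt hx, ZMod.val_cast_of_lt hy] at h3

/-- The key lemma: the coloring `vcol p m` has no monochromatic `k`-AP in
`[1, p^(m-1)*(k-1)]`, for `p` prime, `1 ≤ m ≤ p ≤ k`. -/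
lemma vcol_noAP {p k : ℕ} (hp : p.Prime) (hpk : p ≤ k) :
    ∀ m, 1 ≤ m → m ≤ p → ∀ a d, 1 ≤ a → 1 ≤ d →
      a + (k-1) * d ≤ p^(m-1) * (k-1) →
      ¬ (∀ i < k, vcol p m (a + i * d) = vcol p m a) := by
  have hp2 : 2 ≤ p := hp.two_le
  intro m
  induction m with
  | zero => omega
  | succ n ih =>
    match n, ih with
    | 0, _ =>
      intro _ _ a d ha hd hbound _
      have h1 : (k-1) * 1 ≤ (k-1) * d := Nat.mul_le_mul_left _ hd
      norm_num at hbound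
      omega
    | (m+1), ih =>
      intro _ hmp a d ha hd hbound hmono
      have ihm := ih (by omega) (by omega)
      have hvc : ∀ x, vcol p (m+2) x
          = (vcol p (m+1) ((x-1)/p + 1) + (x-1) % p) % (m+2) := fun _ => rfl
      have hbound' : a + (k-1) * d ≤ p^(m+1) * (k-1) := hbound
      have hfle : ∀ x, vcol p (m+1) x ≤ m := by
        intro x; have := vcol_le p (m+1) x; omega
      by_cases hpd : p ∣ d
      · -- p divides d : reduce to the lower level
        obtain ⟨e, rfl⟩ := hpd
        have he : 1 ≤ e := by
          by_contra h
          have he0 : e = 0 := by omega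
          subst he0
          simp at hd
        refine ihm ((a-1)/p + 1) e (Nat.le_add_left 1 _) he ?_ ?_
        · -- bound for the lower level
          show (a-1)/p + 1 + (k-1)*e ≤ p^m * (k-1)
          have heq2 : (a-1)/p + (k-1)*e = ((a-1) + ((k-1)*e)*p)/p :=
            (Nat.add_mul_div_right _ _ hp.pos).symm
          have hswap : ((k-1)*e)*p = (k-1)*(p*e) := by ring
          have hpe : p^m * (k-1) * p = p^(m+1) * (k-1) := by ring
          have hlt : (a-1) + ((k-1)*e)*p < p^m * (k-1) * p := by
            rw [hswap, hpe]; omega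
          have hdiv := (Nat.div_lt_iff_lt_mul hp.pos).mpr hlt
          have h8 : (a-1)/p + (k-1)*e < p^m * (k-1) := by rw [heq2]; exact hdiv
          linarith
        · -- monochromaticity at the lower level
          intro i hik
          have hmi := hmono i hik
          rw [hvc, hvc] at hmi
          have hswap : i * (p * e) = (i*e) * p := by ring
          have hx1 : a + i * (p * e) - 1 = (a-1) + (i*e)*p := by omega
          rw [hx1, Nat.add_mul_div_right _ _ hp.pos,
            Nat.add_mul_mod_self_right] at hmi
          have harr : (a-1)/p + i*e + 1 = (a-1)/p + 1 + i*e := by ring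
          rw [harr] at hmi
          exact eq_of_mod_s (by omega) (lt_of_le_of_lt (hfle _) (by omega))
            (lt_of_le_of_lt (hfle _) (by omega)) hmi
      · -- p does not divide d
        obtain ⟨i, hip, hieq⟩ := exists_add_mul_mod_eq hp hpd (a-1)
          (((vcol p (m+1) ((a-1)/p + 1) + (a-1) % p) % (m+2) + 1) % (m+2))
          (lt_of_lt_of_le (Nat.mod_lt _ (by omega)) hmp)
        have hmi := hmono i (by omega)
        rw [hvc, hvc] at hmi
        have hx1 : a + i * d - 1 = (a-1) + i*d := by omega
        rw [hx1, hieq] at hmi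
        set s := m + 2 with hsdef
        set C := (vcol p (m+1) ((a-1)/p + 1) + (a-1) % p) % s with hCdef
        set F := vcol p (m+1) (((a-1) + i*d)/p + 1) with hFdef
        -- hmi : (F + (C+1) % s) % s = C
        have hFle : F ≤ m := hfle _
        have hCs : C < s := Nat.mod_lt _ (by omega)
        have e1 : Nat.ModEq s (F + (C+1) % s) C := by
          unfold Nat.ModEq
          rw [hmi, Nat.mod_eq_of_lt hCs]
        have e2 : Nat.ModEq s (C+1) ((C+1) % s) := (Nat.mod_modEq _ _).symm
        have e3 : Nat.ModEq s (F + (C+1)) C := (Nat.ModEq.add_left F e2).trans e1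
        have e4 : Nat.ModEq s (F + 1 + C) (0 + C) := by
          rw [show F + 1 + C = F + (C+1) by ring, Nat.zero_add]
          exact e3
        have e5 : Nat.ModEq s (F + 1) 0 := Nat.ModEq.add_right_cancel' C e4
        have e6 : s ∣ F + 1 := (Nat.modEq_zero_iff_dvd).mp e5
        have e7 : s ≤ F + 1 := Nat.le_of_dvd (by omega) e6
        clear_value F C s
        omega

/-- The explicit good coloring is a valid coloring. -/
lemma vcol_valid {p r k : ℕ} (hp : p.Prime) (hr : 2 ≤ r) (hrp : r ≤ p)
    (hpk : p ≤ k) :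
    validColoring r k (p ^ (r - 1) * (k - 1)) (fun x => vcol p r x + 1) := by
  constructor
  · intro n _ _
    have := vcol_le p r n
    show 1 ≤ vcol p r n + 1 ∧ vcol p r n + 1 ≤ r
    omega
  · rintro ⟨a, d, ha, hd, hb, hmono⟩
    refine vcol_noAP hp hpk r (by omega) hrp a d ha hd hb ?_
    intro i hik
    have h9 := hmono i hik
    simp only [] at h9
    omega

/-- Restriction of a valid coloring to a smaller interval. -/
lemma validColoring_mono {r k N N' : ℕ} {c : ℕ → ℕ} (h : validColoring r k N c)
    (hNN : N' ≤ N) : validColoring r k N' c := by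
  obtain ⟨h1, h2⟩ := h
  refine ⟨fun n hn hn' => h1 n hn (le_trans hn' hNN), ?_⟩
  rintro ⟨a, d, ha, hd, hb, hmono⟩
  exact h2 ⟨a, d, ha, hd, le_trans hb hNN, hmono⟩

/-- Van der Waerden's theorem (finitary version, by compactness):
there is some `N` admitting no valid coloring. -/
lemma exists_no_validColoring (r k : ℕ) (hr : 1 ≤ r) (hk : 1 ≤ k) :
    ∃ N, ¬ ∃ c : ℕ → ℕ, validColoring r k N c := by
  by_contra hcon
  push_neg at hcon
  choose cf hcf using hcon
  -- normalize the colorings so values always lie in [1, r]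
  set c' : ℕ → ℕ → ℕ := fun N n => if 1 ≤ cf N n ∧ cf N n ≤ r then cf N n else 1
    with hc'
  have hrange : ∀ N n, 1 ≤ c' N n ∧ c' N n ≤ r := by
    intro N n
    by_cases h : 1 ≤ cf N n ∧ cf N n ≤ r
    · simp only [hc', if_pos h]; exact h
    · simp only [hc', if_neg h]; omega
  have heq : ∀ N n, 1 ≤ n → n ≤ N → c' N n = cf N n := by
    intro N n h1 h2
    simp only [hc', if_pos ((hcf N).1 n h1 h2)]
  have hnAP : ∀ N, ¬ hasAP (c' N) N k := by
    intro N hAP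
    obtain ⟨a, d, ha, hd, hb, hmono⟩ := hAP
    refine (hcf N).2 ⟨a, d, ha, hd, hb, fun i hi => ?_⟩
    have hpt : a + i * d ≤ N := by
      have : i * d ≤ (k - 1) * d := Nat.mul_le_mul_right _ (by omega)
      omega
    rw [← heq N (a + i * d) (by omega) hpt, ← heq N a (by omega) (by omega)]
    exact hmono i hi
  -- ultrafilter limit coloring
  have hlim : ∀ n : ℕ, ∃ v, v ∈ Finset.Icc 1 r ∧
      {N | c' N n = v} ∈ Filter.hyperfilter ℕ := by
    intro n
    have hcov : (⋃ v ∈ (Finset.Icc 1 r : Finset ℕ), {N | c' N n = v})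
        ∈ Filter.hyperfilter ℕ := by
      have huniv : (⋃ v ∈ (Finset.Icc 1 r : Finset ℕ), {N | c' N n = v})
          = Set.univ := by
        apply Set.eq_univ_of_forall
        intro N
        have h := hrange N n
        simp only [Set.mem_iUnion, Set.mem_setOf_eq, Finset.mem_Icc, exists_prop]
        exact ⟨c' N n, ⟨h.1, h.2⟩, rfl⟩
      rw [huniv]; exact Filter.univ_mem
    have h7 := (Ultrafilter.finite_biUnion_mem_iff
      (Finset.Icc 1 r).finite_toSet).mp hcov
    simpa using h7
  choose cl hcl1 hcl2 using hlim
  have hclr : ∀ n, 1 ≤ cl n ∧ cl n ≤ r := by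
    intro n; have := hcl1 n; simp only [Finset.mem_Icc] at this; exact this
  -- apply the infinitary van der Waerden theorem
  obtain ⟨d, hdpos, b, col, hcol⟩ :=
    Combinatorics.exists_mono_homothetic_copy (Finset.range k)
      (fun n => (⟨cl (n + 1), by have := hclr (n+1); omega⟩ : Fin (r+1)))
  have hval : ∀ i < k, cl (d * i + b + 1) = col.val := by
    intro i hi
    have h1 := hcol i (Finset.mem_range.mpr hi)
    have h2 := congrArg Fin.val h1
    simpa [nsmul_eq_mul] using h2
  have h0 := hval 0 (by omega)
  simp only [mul_zero, zero_add] at h0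
  have hclAP : ∀ i < k, cl (d * i + b + 1) = cl (b + 1) := by
    intro i hi
    rw [hval i hi, ← h0]
  -- find a large N agreeing with the limit coloring on the AP
  have hT : ({N | b + 1 + (k - 1) * d ≤ N} ∩
      ⋂ i ∈ Finset.range k, {N | c' N (b + 1 + i * d) = cl (b + 1 + i * d)})
      ∈ Filter.hyperfilter ℕ := by
    refine Filter.inter_mem ?_ ?_
    · exact Nat.hyperfilter_le_atTop (Filter.mem_atTop _)
    · exact (Filter.biInter_mem (Finset.range k).finite_toSet).mpr
        (fun i _ => hcl2 (b + 1 + i * d))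
  obtain ⟨N, hN1, hN2⟩ := Ultrafilter.nonempty_of_mem hT
  simp only [Set.mem_iInter, Set.mem_setOf_eq] at hN1 hN2
  refine hnAP N ⟨b + 1, d, by omega, by omega, hN1, fun i hi => ?_⟩
  have hNi := hN2 i (Finset.mem_range.mpr hi)
  have hN00 := hN2 0 (Finset.mem_range.mpr (by omega))
  simp only [zero_mul, add_zero] at hN00
  rw [hNi, hN00]
  have harg : b + 1 + i * d = d * i + b + 1 := by ring
  rw [harg]
  exact hclAP i hi

/-- For a prime `p` with `2 ≤ r ≤ p ≤ k`, `w(r,k) > p^(r-1) * (k-1)`; that is,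
there is an `r`-coloring of `{1,...,p^(r-1)*(k-1)}` with no monochromatic
`k`-term AP. -/
theorem vdw_gt_pow (p r k : ℕ) (hp : p.Prime) (hr : 2 ≤ r) (hrp : r ≤ p)
    (hpk : p ≤ k) :
    p ^ (r - 1) * (k - 1) < vdw r k ∧
      ∃ c : ℕ → ℕ, validColoring r k (p ^ (r - 1) * (k - 1)) c := by
  have hp2 : 2 ≤ p := hp.two_le
  have hvalid := vcol_valid hp hr hrp hpk
  constructor
  · have hne : {N | ¬ ∃ c : ℕ → ℕ, validColoring r k N c}.Nonempty := by
      obtain ⟨N, hN⟩ := exists_no_validColoring r k (by omega) (by omega)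
      exact ⟨N, hN⟩
    by_contra hle
    push_neg at hle
    have hmem := Nat.sInf_mem hne
    exact hmem ⟨_, validColoring_mono hvalid hle⟩
  · exact ⟨_, hvalid⟩
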